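/- Let N = p^k · m^2 be an odd perfect number, where p is a prime with p ≡ k ≡ 1 (mod 4) and gcd(p, m) = 1. If m < σ(p^k) and σ(m)/p^k < σ(p^k)/m, then m < p^k. -/

import Mathlib

open ArithmeticFunction Finset
open scoped ArithmeticFunction.sigma

lemma div_gcd_dvd_of_dvd_sq {f m : ℕ} (hm : 0 < m) (hf : f ∣ m ^ 2) :
    f / Nat.gcd f m ∣ m := by
  set d := Nat.gcd f m with hd
  have hd0 : 0 < d := Nat.gcd_pos_of_pos_right f hm
  have hdf : d ∣ f := Nat.gcd_dvd_left f m
  have hdm : d ∣ m := Nat.gcd_dvd_right f m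
  obtain ⟨c, hc⟩ := hf
  have hdvd : f / d ∣ m * (m / d) := by
    refine ⟨c, ?_⟩
    have : (m * (m / d)) * d = (f / d * c) * d := by
      rw [mul_assoc, Nat.div_mul_cancel hdm, mul_right_comm, Nat.div_mul_cancel hdf]
      rw [← hc]; ring
    exact Nat.eq_of_mul_eq_mul_right hd0 this
  exact (Nat.coprime_div_gcd_div_gcd hd0).dvd_of_dvd_mul_right hdvd

lemma sigma_sq_le (m : ℕ) (hm : 0 < m) : σ 1 (m ^ 2) ≤ (σ 1 m) ^ 2 := by
  have hm2 : (m ^ 2 : ℕ) ≠ 0 := by positivity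
  calc σ 1 (m ^ 2) = ∑ f ∈ (m ^ 2).divisors, Nat.gcd f m * (f / Nat.gcd f m) := by
        rw [sigma_one_apply]
        refine Finset.sum_congr rfl fun f hf => ?_
        exact (Nat.mul_div_cancel' (Nat.gcd_dvd_left f m)).symm
    _ = ∑ q ∈ (m ^ 2).divisors.image (fun f => (Nat.gcd f m, f / Nat.gcd f m)), q.1 * q.2 := by
        rw [Finset.sum_image]
        intro f hf g hg h
        have h1 : Nat.gcd f m = Nat.gcd g m := congrArg Prod.fst h
        have h2 : f / Nat.gcd f m = g / Nat.gcd g m := congrArg Prod.snd h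
        calc f = Nat.gcd f m * (f / Nat.gcd f m) :=
              (Nat.mul_div_cancel' (Nat.gcd_dvd_left f m)).symm
          _ = Nat.gcd g m * (g / Nat.gcd g m) := by rw [h2, h1]
          _ = g := Nat.mul_div_cancel' (Nat.gcd_dvd_left g m)
    _ ≤ ∑ q ∈ m.divisors ×ˢ m.divisors, q.1 * q.2 := by
        refine Finset.sum_le_sum_of_subset fun q hq => ?_
        obtain ⟨f, hf, rfl⟩ := Finset.mem_image.mp hq
        have hfd : f ∣ m ^ 2 := (Nat.mem_divisors.mp hf).1
        simp only [Finset.mem_product, Nat.mem_divisors]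
        exact ⟨⟨Nat.gcd_dvd_right f m, hm.ne'⟩, div_gcd_dvd_of_dvd_sq hm hfd, hm.ne'⟩
    _ = (σ 1 m) ^ 2 := by
        rw [sigma_one_apply, sq, Finset.sum_mul_sum, ← Finset.sum_product']

theorem stmt_11 (p k m : ℕ) (hp : p.Prime) (hp4 : p % 4 = 1) (hk4 : k % 4 = 1)
    (hcop : Nat.Coprime p m) (hodd : Odd (p ^ k * m ^ 2))
    (hperf : Nat.Perfect (p ^ k * m ^ 2)) (h1 : m < ArithmeticFunction.sigma 1 (p ^ k))
    (h2 : (ArithmeticFunction.sigma 1 m : ℚ) / (p ^ k : ℚ) < (ArithmeticFunction.sigma 1 (p ^ k) : ℚ) / (m : ℚ)) :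
    m < p ^ k := by
  have hN : 0 < p ^ k * m ^ 2 := hperf.2
  have hm : 0 < m := by
    rcases Nat.eq_zero_or_pos m with h | h
    · simp [h] at hN
    · exact h
  have hP : 0 < p ^ k := pow_pos hp.pos k
  have hp5 : 5 ≤ p := by
    have := hp.two_le
    omega
  have key : ∀ n, 4 * (∑ i ∈ Finset.range (n + 1), p ^ i) ≤ 5 * p ^ n := by
    intro n
    induction n with
    | zero => simp
    | succ n ih =>
      rw [Finset.sum_range_succ, pow_succ]
      have hpn : 0 < p ^ n := pow_pos hp.pos n
      nlinarith [ih]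
  set P := p ^ k with hPdef
  set S := σ 1 (p ^ k) with hSdef
  set s := σ 1 m with hsdef
  set T := σ 1 (m ^ 2) with hTdef
  have hmul : S * T = 2 * (P * m ^ 2) := by
    rw [hSdef, hTdef, ← isMultiplicative_sigma.map_mul_of_coprime (Nat.Coprime.pow k 2 hcop)]
    rw [sigma_one_apply]
    exact (Nat.perfect_iff_sum_divisors_eq_two_mul hN).mp hperf
  have hS : 0 < S := by
    rcases Nat.eq_zero_or_pos S with h | h
    · rw [h, zero_mul] at hmul; omega
    · exact h
  have hbound : 4 * S ≤ 5 * P := by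
    rw [hSdef, sigma_one_apply_prime_pow hp, hPdef]
    exact key k
  have hcross : s * m < S * P := by
    rw [div_lt_div_iff₀ (by positivity) (by exact_mod_cast hm)] at h2
    exact_mod_cast h2
  have hm2 : T ≤ s ^ 2 := sigma_sq_le m hm
  have step1 : (s * m) ^ 2 < (S * P) ^ 2 :=
    Nat.pow_lt_pow_left hcross (by norm_num)
  have A : 2 * P * m ^ 4 < S ^ 3 * P ^ 2 := by
    calc 2 * P * m ^ 4 = (S * T) * m ^ 2 := by rw [hmul]; ring
      _ ≤ (S * s ^ 2) * m ^ 2 :=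
          Nat.mul_le_mul_right _ (Nat.mul_le_mul_left _ hm2)
      _ = S * (s * m) ^ 2 := by ring
      _ < S * (S * P) ^ 2 := mul_lt_mul_of_pos_left step1 hS
      _ = S ^ 3 * P ^ 2 := by ring
  have B : 64 * S ^ 3 ≤ 125 * P ^ 3 := by
    have := Nat.pow_le_pow_left hbound 3
    calc 64 * S ^ 3 = (4 * S) ^ 3 := by ring
      _ ≤ (5 * P) ^ 3 := this
      _ = 125 * P ^ 3 := by ring
  have C : P * (128 * m ^ 4) < P * (125 * P ^ 4) := by
    calc P * (128 * m ^ 4) = 64 * (2 * P * m ^ 4) := by ring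
      _ < 64 * (S ^ 3 * P ^ 2) := mul_lt_mul_of_pos_left A (by norm_num)
      _ = (64 * S ^ 3) * P ^ 2 := by ring
      _ ≤ (125 * P ^ 3) * P ^ 2 := Nat.mul_le_mul_right _ B
      _ = P * (125 * P ^ 4) := by ring
  have D : 128 * m ^ 4 < 125 * P ^ 4 := Nat.lt_of_mul_lt_mul_left C
  have E : m ^ 4 < P ^ 4 := by omega
  exact (Nat.pow_lt_pow_iff_left (by norm_num : (4:ℕ) ≠ 0)).mp E
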